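/- Let R be a commutative Noetherian ring of Krull dimension d and let (a_0, a_1, …, a_n) be a unimodular row over R with n > d. Then the row is reducible: there exist elements making (a_0,…,a_n) equivalent (under elementary transformations) to (1, 0, …, 0). -/
import Mathlib

open Matrix

section Aux

variable {R : Type*} [CommRing R]

/-- Coset avoidance: given a finite set of pairwise incomparable primes none containing `b`,
we can shift `x` by a multiple of `b` to avoid all of them. -/
lemma avoid_primes (S : Finset (Ideal R)) (hP : ∀ q ∈ S, q.IsPrime)
    (hinc : ∀ q ∈ S, ∀ q' ∈ S, q ≤ q' → q = q') (b : R) (hb : ∀ q ∈ S, b ∉ q) (x : R) :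
    ∃ t : R, ∀ q ∈ S, x + t * b ∉ q := by
  classical
  -- pick for each pair (q, q') an element of q' not in q
  have hy : ∀ q ∈ S, ∀ q' ∈ S, q' ≠ q → ∃ z, z ∈ q' ∧ z ∉ q := by
    intro q hq q' hq' hne
    by_contra h
    push_neg at h
    exact hne (hinc q' hq' q hq fun z hz => h z hz)
  set y : Ideal R → Ideal R → R := fun q q' =>
    if h : ∃ z, z ∈ q' ∧ z ∉ q then h.choose else 0 with hy_def
  have hy1 : ∀ q ∈ S, ∀ q' ∈ S, q' ≠ q → y q q' ∈ q' ∧ y q q' ∉ q := by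
    intro q hq q' hq' hne
    have h := hy q hq q' hq' hne
    simp only [hy_def, dif_pos h]
    exact h.choose_spec
  set X : Ideal R → R := fun q => ∏ q' ∈ S.erase q, y q q' with hX_def
  have hX1 : ∀ q ∈ S, X q ∉ q := by
    intro q hq
    intro hmem
    have hpq : q.IsPrime := hP q hq
    obtain ⟨q', hq', hq'mem⟩ := Ideal.IsPrime.prod_mem_iff.mp hmem
    obtain ⟨hne, hq'S⟩ := Finset.mem_erase.mp hq'
    exact (hy1 q hq q' hq'S hne).2 hq'mem
  have hX2 : ∀ q ∈ S, ∀ q' ∈ S, q' ≠ q → X q' ∈ q := by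
    intro q hq q' hq' hne
    have hmem : q ∈ S.erase q' := Finset.mem_erase.mpr ⟨fun h => hne h.symm, hq⟩
    rw [hX_def]
    dsimp only
    rw [← Finset.mul_prod_erase _ _ hmem]
    exact Ideal.mul_mem_right _ _ (hy1 q' hq' q hq (fun h => hne h.symm)).1
  set d : Ideal R → R := fun q => if x ∈ q then 1 else 0 with hd_def
  refine ⟨∑ q ∈ S, d q * X q, ?_⟩
  intro q hq hmem
  have hsplit : x + (∑ q' ∈ S, d q' * X q') * b
      = (x + d q * X q * b) + (∑ q' ∈ S.erase q, d q' * X q') * b := by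
    rw [← Finset.add_sum_erase _ _ hq]; ring
  rw [hsplit] at hmem
  have h2 : (∑ q' ∈ S.erase q, d q' * X q') * b ∈ q := by
    refine Ideal.mul_mem_right _ _ (Ideal.sum_mem _ fun q' hq' => ?_)
    obtain ⟨hne, hq'S⟩ := Finset.mem_erase.mp hq'
    exact Ideal.mul_mem_left _ _ (hX2 q hq q' hq'S hne)
  have h1 : x + d q * X q * b ∈ q := by
    have := q.sub_mem hmem h2; simpa using this
  by_cases hx : x ∈ q
  · have h1' : x + X q * b ∈ q := by rw [hd_def] at h1; simpa [hx] using h1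
    have : X q * b ∈ q := by simpa using q.sub_mem h1' hx
    rcases (hP q hq).mem_or_mem this with h | h
    · exact hX1 q hq h
    · exact hb q hq h
  · have h1' : x ∈ q := by rw [hd_def] at h1; simpa [hx] using h1
    exact hx h1'

/-- Finiteness of the set of minimal primes over an ideal in a Noetherian ring. -/
lemma finite_minimalPrimes [IsNoetherianRing R] (I : Ideal R) : I.minimalPrimes.Finite := by
  rw [Ideal.minimalPrimes_eq_comap]
  exact (minimalPrimes.finite_of_isNoetherianRing (R ⧸ I)).image _

end Aux

section Reach

variable {R : Type*} [CommRing R] {m : ℕ}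

/-- Reachability by elementary row operations (acting on rows on the right). -/
def ElemReach (a b : Fin m → R) : Prop :=
  ∃ L : List (Matrix (Fin m) (Fin m) R),
    (∀ B ∈ L, ∃ (i j : Fin m) (c : R), i ≠ j ∧ B = Matrix.transvection i j c) ∧
    Matrix.vecMul a L.prod = b

lemma ElemReach.refl (a : Fin m → R) : ElemReach a a :=
  ⟨[], by simp, by simp [Matrix.vecMul_one]⟩

lemma vecMul_stdBasisMatrix' (b : Fin m → R) (i j : Fin m) (c : R) :
    Matrix.vecMul b (Matrix.single i j c) = Function.update (0 : Fin m → R) j (b i * c) := by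
  classical
  funext k
  simp only [Matrix.vecMul, dotProduct, Matrix.single, Matrix.of_apply,
    Function.update]
  by_cases hk : k = j
  · subst hk
    simp [Finset.sum_ite_eq', mul_comm]
  · have hjk : ¬ j = k := fun h => hk h.symm
    simp [hjk, hk]

lemma vecMul_transvection (b : Fin m → R) {i j : Fin m} (_hij : i ≠ j) (c : R) :
    Matrix.vecMul b (Matrix.transvection i j c) = Function.update b j (b j + b i * c) := by
  classical
  rw [Matrix.transvection, Matrix.vecMul_add, Matrix.vecMul_one, vecMul_stdBasisMatrix']
  funext k
  by_cases hk : k = j <;> simp [Function.update, hk]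

lemma ElemReach.step {a b : Fin m → R} (h : ElemReach a b) {i j : Fin m} (hij : i ≠ j) (c : R) :
    ElemReach a (Function.update b j (b j + b i * c)) := by
  obtain ⟨L, hL, hv⟩ := h
  refine ⟨L ++ [Matrix.transvection i j c], ?_, ?_⟩
  · intro B hB
    rcases List.mem_append.mp hB with h | h
    · exact hL B h
    · simp only [List.mem_singleton] at h
      exact ⟨i, j, c, hij, h⟩
  · rw [List.prod_append, List.prod_singleton, ← Matrix.vecMul_vecMul, hv,
      vecMul_transvection b hij c]

lemma ElemReach.addMul {a b : Fin m → R} (h : ElemReach a b) (i0 : Fin m) (t : Fin m → R) :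
    ∀ s : Finset (Fin m), i0 ∉ s →
      ElemReach a (fun k => if k ∈ s then b k + b i0 * t k else b k) := by
  classical
  intro s
  induction s using Finset.induction_on with
  | empty => intro _; simpa using h
  | @insert j s hj ih =>
    intro hi0
    have hi0s : i0 ∉ s := fun h' => hi0 (Finset.mem_insert_of_mem h')
    have hne : i0 ≠ j := fun h' => hi0 (h' ▸ Finset.mem_insert_self j s)
    have hstep := (ih hi0s).step hne (t j)
    convert hstep using 1
    funext k
    by_cases hkj : k = j
    · subst hkj
      simp [Function.update, hj, hi0s]
    · by_cases hks : k ∈ s <;>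
        simp [Function.update, hkj, hks, Finset.mem_insert]

lemma ElemReach.updSum {a b : Fin m → R} (h : ElemReach a b) {i0 : Fin m} (c : Fin m → R) :
    ∀ s : Finset (Fin m), i0 ∉ s →
      ElemReach a (Function.update b i0 (b i0 + ∑ j ∈ s, b j * c j)) := by
  classical
  intro s
  induction s using Finset.induction_on with
  | empty =>
    intro _
    simpa [Function.update_eq_self] using h
  | @insert j s hj ih =>
    intro hi0
    have hi0s : i0 ∉ s := fun h' => hi0 (Finset.mem_insert_of_mem h')
    have hne : j ≠ i0 := fun h' => hi0 (h' ▸ Finset.mem_insert_self j s)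
    have hstep := (ih hi0s).step hne (c j)
    convert hstep using 1
    funext k
    by_cases hk : k = i0
    · subst hk
      simp only [Function.update_self, Function.update_of_ne hne, Finset.sum_insert hj]
      ring
    · simp [Function.update, hk]

lemma ElemReach.clear {a b : Fin m → R} (h : ElemReach a b) {i0 : Fin m} (hb : b i0 = 1) :
    ∀ s : Finset (Fin m), i0 ∉ s →
      ElemReach a (fun k => if k ∈ s then 0 else b k) := by
  classical
  intro s
  induction s using Finset.induction_on with
  | empty => intro _; simpa using h
  | @insert j s hj ih =>
    intro hi0
    have hi0s : i0 ∉ s := fun h' => hi0 (Finset.mem_insert_of_mem h')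
    have hne : i0 ≠ j := fun h' => hi0 (h' ▸ Finset.mem_insert_self j s)
    have hstep := (ih hi0s).step hne (-(b j))
    convert hstep using 1
    funext k
    by_cases hkj : k = j
    · subst hkj
      simp [Function.update, hj, hi0s, hb]
    · by_cases hks : k ∈ s <;>
        simp [Function.update, hkj, hks, Finset.mem_insert]

lemma sum_erase_zero {n : ℕ} (f : Fin (n + 1) → R) :
    ∑ j ∈ Finset.univ.erase 0, f j = ∑ i : Fin n, f i.succ := by
  have h1 := Finset.add_sum_erase Finset.univ f (Finset.mem_univ (0 : Fin (n + 1)))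
  have h2 := Fin.sum_univ_succ f
  rw [h2] at h1
  exact add_left_cancel h1

end Reach

section Main

variable {R : Type*} [CommRing R]

/-- The key shortening lemma. -/
lemma shorten [IsNoetherianRing R] (d n : ℕ) (hdim : ringKrullDim R = d) (hn : d < n)
    (a : Fin (n + 1) → R) (ha : ∃ b : Fin (n + 1) → R, ∑ i, a i * b i = 1) :
    ∃ t : Fin n → R,
      Ideal.span (Set.range fun j : Fin n => a j.succ + t j * a 0) = ⊤ := by
  classical
  -- the partial ideals
  set I : (Fin n → R) → ℕ → Ideal R := fun t k =>
    Ideal.span ((fun j : Fin n => a j.succ + t j * a 0) '' {j : Fin n | (j : ℕ) < k}) with hI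
  -- main induction
  have key : ∀ k, k ≤ n → ∃ t : Fin n → R, ∀ q : Ideal R, q.IsPrime → I t k ≤ q →
      a 0 ∉ q → ∃ c : LTSeries (PrimeSpectrum R), c.length = k ∧ c.last.asIdeal ≤ q := by
    intro k
    induction k with
    | zero =>
      intro _
      refine ⟨0, fun q hq _ _ => ⟨RelSeries.singleton _ ⟨q, hq⟩, rfl, le_refl _⟩⟩
    | succ k ih =>
      intro hk1
      obtain ⟨t, ht⟩ := ih (Nat.le_of_succ_le hk1)
      -- the primes to avoid
      have hfin : {q ∈ (I t k).minimalPrimes | a 0 ∉ q}.Finite :=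
        (finite_minimalPrimes (I t k)).subset (fun q hq => hq.1)
      set S := hfin.toFinset with hS
      have hSmem : ∀ q, q ∈ S ↔ q ∈ (I t k).minimalPrimes ∧ a 0 ∉ q := by
        intro q; rw [hS, Set.Finite.mem_toFinset]; rfl
      have hprime : ∀ q ∈ S, q.IsPrime := fun q hq => ((hSmem q).mp hq).1.1.1
      have hinc : ∀ q ∈ S, ∀ q' ∈ S, q ≤ q' → q = q' := by
        intro q hq q' hq' hle
        have h1 := ((hSmem q).mp hq).1
        have h2 := ((hSmem q').mp hq').1
        exact le_antisymm hle (h2.2 h1.1 hle)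
      have hb : ∀ q ∈ S, a 0 ∉ q := fun q hq => ((hSmem q).mp hq).2
      have hkn : k < n := hk1
      obtain ⟨tk, htk⟩ := avoid_primes S hprime hinc (a 0) hb (a (⟨k, hkn⟩ : Fin n).succ)
      set t' := Function.update t ⟨k, hkn⟩ tk with ht'
      have hsame : I t' k = I t k := by
        rw [hI]
        dsimp only
        congr 1
        apply Set.image_congr
        intro j hj
        have : j ≠ ⟨k, hkn⟩ := by
          intro h
          rw [h] at hj
          exact absurd hj (lt_irrefl k)
        rw [ht', Function.update_of_ne this]
      refine ⟨t', ?_⟩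
      intro q hq hle h0
      have hIk : I t k ≤ q := by
        rw [← hsame]
        refine le_trans (Ideal.span_mono (Set.image_mono ?_)) hle
        intro j hj
        exact Nat.lt_succ_of_lt hj
      obtain ⟨q0, hq0, hq0le⟩ := Ideal.exists_minimalPrimes_le (J := q) hIk
      have hq0p : q0.IsPrime := hq0.1.1
      have h00 : a 0 ∉ q0 := fun h => h0 (hq0le h)
      have hq0S : q0 ∈ S := (hSmem q0).mpr ⟨hq0, h00⟩
      obtain ⟨c, hclen, hclast⟩ := ht q0 hq0p hq0.1.2 h00
      -- the new element lies in q but not q0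
      have hnew : a (⟨k, hkn⟩ : Fin n).succ + tk * a 0 ∈ q := by
        apply hle
        apply Ideal.subset_span
        refine ⟨⟨k, hkn⟩, Nat.lt_succ_self k, ?_⟩
        simp [ht']
      have hnot : a (⟨k, hkn⟩ : Fin n).succ + tk * a 0 ∉ q0 := htk q0 hq0S
      have hlt : q0 < q := lt_of_le_of_ne hq0le (fun h => hnot (h ▸ hnew))
      have hlast_lt : c.last < ⟨q, hq⟩ := by
        have : c.last.asIdeal < q := lt_of_le_of_lt hclast hlt
        exact this
      refine ⟨c.snoc ⟨q, hq⟩ hlast_lt, ?_, ?_⟩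
      · simp [hclen]
      · rw [RelSeries.last_snoc]
  obtain ⟨t, ht⟩ := key n (le_refl n)
  refine ⟨t, ?_⟩
  have hrange : (fun j : Fin n => a j.succ + t j * a 0) '' {j : Fin n | (j : ℕ) < n}
      = Set.range fun j : Fin n => a j.succ + t j * a 0 := by
    rw [show {j : Fin n | (j : ℕ) < n} = Set.univ from Set.eq_univ_of_forall fun j => j.2,
      Set.image_univ]
  by_contra hne
  obtain ⟨M, hM, hleM⟩ := Ideal.exists_le_maximal _ hne
  by_cases h0 : a 0 ∈ M
  · -- then all entries lie in M, contradicting unimodularity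
    have hall : ∀ i : Fin (n + 1), a i ∈ M := by
      intro i
      refine Fin.cases h0 (fun j => ?_) i
      have hmem : a j.succ + t j * a 0 ∈ M := by
        apply hleM
        exact Ideal.subset_span ⟨j, rfl⟩
      have := M.sub_mem hmem (M.mul_mem_left (t j) h0)
      simpa using this
    obtain ⟨b, hbsum⟩ := ha
    have : (1 : R) ∈ M := by
      rw [← hbsum]
      exact Ideal.sum_mem _ fun i _ => M.mul_mem_right _ (hall i)
    exact hM.ne_top (Ideal.eq_top_of_isUnit_mem _ this isUnit_one)
  · obtain ⟨c, hclen, _⟩ := ht M hM.isPrime (by show Ideal.span _ ≤ M; rw [hrange]; exact hleM) h0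
    have hle : (c.length : WithBot ℕ∞) ≤ ringKrullDim R := Order.LTSeries.length_le_krullDim c
    rw [hdim, hclen] at hle
    have : (n : WithBot ℕ∞) ≤ (d : WithBot ℕ∞) := by exact_mod_cast hle
    have : n ≤ d := by exact_mod_cast this
    omega

end Main

/-- Bass's stable range theorem: over a commutative Noetherian ring R of Krull
dimension d, every unimodular row (a_0,…,a_n) of length n+1 with n > d can be transformed by
elementary transformations (products of elementary/transvection matrices) into the standard
row (1,0,…,0). -/
theorem bass_stable_range (R : Type*) [CommRing R] [IsNoetherianRing R] (d n : ℕ)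
    (hdim : ringKrullDim R = d) (hn : d < n)
    (a : Fin (n + 1) → R) (ha : ∃ b : Fin (n + 1) → R, ∑ i, a i * b i = 1) :
    ∃ L : List (Matrix (Fin (n + 1)) (Fin (n + 1)) R),
      (∀ B ∈ L, ∃ (i j : Fin (n + 1)) (c : R), i ≠ j ∧ B = Matrix.transvection i j c) ∧
      Matrix.vecMul a L.prod = Pi.single 0 1 := by
  classical
  obtain ⟨t, ht⟩ := shorten d n hdim hn a ha
  -- lift the shortening coefficients to `Fin (n+1)`
  set t' : Fin (n + 1) → R := fun k => if h : k = 0 then 0 else t (k.pred h) with ht'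
  set s0 : Finset (Fin (n + 1)) := Finset.univ.erase 0 with hs0
  have h0s0 : (0 : Fin (n + 1)) ∉ s0 := Finset.notMem_erase _ _
  have hmem_s0 : ∀ k : Fin (n + 1), k ∈ s0 ↔ k ≠ 0 := by
    intro k; rw [hs0, Finset.mem_erase]; simp
  -- Phase 1 : add multiples of a 0 to the other entries
  set a1 : Fin (n + 1) → R := fun k => if k ∈ s0 then a k + a 0 * t' k else a k with ha1
  have r1 : ElemReach a a1 := (ElemReach.refl a).addMul 0 t' s0 h0s0
  have ha1_0 : a1 0 = a 0 := by rw [ha1]; simp [h0s0]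
  have ha1_succ : ∀ i : Fin n, a1 i.succ = a i.succ + t i * a 0 := by
    intro i
    have hne : i.succ ≠ (0 : Fin (n + 1)) := Fin.succ_ne_zero i
    rw [ha1]
    simp only [(hmem_s0 i.succ).mpr hne, if_pos, ht']
    rw [dif_neg hne, Fin.pred_succ, mul_comm]
  -- coefficients witnessing unimodularity of the shortened row
  have h1mem : (1 : R) ∈ Ideal.span (Set.range fun j : Fin n => a j.succ + t j * a 0) := by
    rw [ht]; trivial
  obtain ⟨c, hc⟩ := (Submodule.mem_span_range_iff_exists_fun R).mp h1mem
  set c' : Fin (n + 1) → R := fun k => if h : k = 0 then 0 else (1 - a 0) * c (k.pred h) with hc'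
  -- Phase 2 : make the first entry 1
  set a2 : Fin (n + 1) → R := Function.update a1 0 (a1 0 + ∑ j ∈ s0, a1 j * c' j) with ha2
  have r2 : ElemReach a a2 := r1.updSum c' s0 h0s0
  have hsum : ∑ j ∈ s0, a1 j * c' j = 1 - a 0 := by
    rw [hs0, sum_erase_zero]
    have : ∀ i : Fin n, a1 i.succ * c' i.succ
        = (1 - a 0) * (c i • (a i.succ + t i * a 0)) := by
      intro i
      have hne : i.succ ≠ (0 : Fin (n + 1)) := Fin.succ_ne_zero i
      rw [ha1_succ i, hc', smul_eq_mul]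
      simp only [dif_neg hne, Fin.pred_succ]
      ring
    rw [Finset.sum_congr rfl fun i _ => this i, ← Finset.mul_sum, hc, mul_one]
  have ha2_0 : a2 0 = 1 := by
    rw [ha2, Function.update_self, ha1_0, hsum]; ring
  have ha2_ne : ∀ k : Fin (n + 1), k ≠ 0 → a2 k = a1 k := by
    intro k hk; rw [ha2, Function.update_of_ne hk]
  -- Phase 3 : clear the other entries
  have r3 : ElemReach a (fun k => if k ∈ s0 then 0 else a2 k) := r2.clear ha2_0 s0 h0s0
  obtain ⟨L, hL, hv⟩ := r3
  refine ⟨L, hL, ?_⟩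
  rw [hv]
  funext k
  by_cases hk : k = 0
  · subst hk
    simp [h0s0, ha2_0]
  · rw [if_pos ((hmem_s0 k).mpr hk)]
    rw [Pi.single_eq_of_ne hk]
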